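/- Let $r\in(0,1)$. The function $p \mapsto \big((1-r)^{1-p} + r^{1-p}\big)^{-1/p}$ is (weakly) decreasing on $(0,1)$; equivalently, the power-utility indifference value $\pi^{\mathrm{pwr}}(v) = v\big(1-((1-r)^{1-p}+r^{1-p})^{-1/p}\big)$ is nondecreasing in $p\in(0,1)$ for every $v>0$. -/

import Mathlib

open Real

/-- For `r ∈ (0,1)`, the map `p ↦ ((1-r)^{1-p} + r^{1-p})^{-1/p}` is
(weakly) decreasing on `(0,1)`; equivalently, the power-utility indifference value
`π(v) = v (1 - ((1-r)^{1-p}+r^{1-p})^{-1/p})` is nondecreasing in `p ∈ (0,1)` for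
every `v > 0`. -/
theorem value_info_stmt10 (r : ℝ) (hr : r ∈ Set.Ioo (0 : ℝ) 1) :
    AntitoneOn (fun p : ℝ => ((1 - r) ^ (1 - p) + r ^ (1 - p)) ^ (-1 / p))
      (Set.Ioo (0 : ℝ) 1)
    ∧ ∀ v : ℝ, 0 < v →
      MonotoneOn (fun p : ℝ => v * (1 - ((1 - r) ^ (1 - p) + r ^ (1 - p)) ^ (-1 / p)))
        (Set.Ioo (0 : ℝ) 1) := by
  obtain ⟨hr0, hr1⟩ := hr
  set a : ℝ := 1 - r with ha_def
  have ha : 0 < a := by simp [ha_def]; linarith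
  have hb : 0 < r := hr0
  have hab : a + r = 1 := by ring
  have hS : ∀ p : ℝ, 0 < a ^ (1 - p) + r ^ (1 - p) := fun p => by positivity
  have key : AntitoneOn (fun p : ℝ => (a ^ (1 - p) + r ^ (1 - p)) ^ (-1 / p))
      (Set.Ioo (0 : ℝ) 1) := by
    intro p hp q hq hpq
    obtain ⟨hp0, hp1⟩ := hp
    obtain ⟨hq0, hq1⟩ := hq
    set t : ℝ := p / q with ht_def
    have ht0 : 0 < t := div_pos hp0 hq0
    have ht1 : t ≤ 1 := (div_le_one hq0).2 hpq
    -- Jensen step: S p ≤ (S q) ^ t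
    have split : ∀ s : ℝ, a ^ (1 - s) + r ^ (1 - s) = a * a ^ (-s) + r * r ^ (-s) := by
      intro s
      rw [show (1 : ℝ) - s = 1 + (-s) by ring, rpow_add ha, rpow_add hb, rpow_one, rpow_one]
    have jensen : a * (a ^ (-q)) ^ t + r * (r ^ (-q)) ^ t
        ≤ (a * a ^ (-q) + r * r ^ (-q)) ^ t := by
      have hc := Real.concaveOn_rpow ht0.le ht1
      have := hc.2 (x := a ^ (-q)) (y := r ^ (-q))
        (Set.mem_Ici.2 (rpow_nonneg ha.le _)) (Set.mem_Ici.2 (rpow_nonneg hb.le _))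
        ha.le hb.le hab
      simpa [smul_eq_mul] using this
    have hqt : -q * t = -p := by rw [ht_def]; field_simp
    have hstep : a ^ (1 - p) + r ^ (1 - p) ≤ (a ^ (1 - q) + r ^ (1 - q)) ^ t := by
      rw [split p, split q]
      calc a * a ^ (-p) + r * r ^ (-p)
          = a * (a ^ (-q)) ^ t + r * (r ^ (-q)) ^ t := by
            rw [← Real.rpow_mul ha.le, ← Real.rpow_mul hb.le, hqt]
        _ ≤ _ := jensen
    -- raise to 1/p
    have h2 : (a ^ (1 - p) + r ^ (1 - p)) ^ (1 / p)
        ≤ (a ^ (1 - q) + r ^ (1 - q)) ^ (1 / q) := by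
      have := Real.rpow_le_rpow (hS p).le hstep (by positivity : (0:ℝ) ≤ 1 / p)
      calc (a ^ (1 - p) + r ^ (1 - p)) ^ (1 / p)
          ≤ ((a ^ (1 - q) + r ^ (1 - q)) ^ t) ^ (1 / p) := this
        _ = (a ^ (1 - q) + r ^ (1 - q)) ^ (1 / q) := by
            rw [← Real.rpow_mul (hS q).le]
            congr 1
            field_simp [ht_def]
            rw [ht_def, div_mul_cancel₀ p hq0.ne']
    have hinv : ∀ s : ℝ, 0 < s → (a ^ (1 - s) + r ^ (1 - s)) ^ (-1 / s)
        = ((a ^ (1 - s) + r ^ (1 - s)) ^ (1 / s))⁻¹ := by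
      intro s hs
      rw [← Real.rpow_neg (hS s).le]
      congr 1
      ring
    simp only
    rw [hinv p hp0, hinv q hq0]
    exact inv_anti₀ (Real.rpow_pos_of_pos (hS p) _) h2
  refine ⟨key, fun v hv p hp q hq hpq => ?_⟩
  simp only
  have := key hp hq hpq
  nlinarith [this]
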